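/- Let d ≥ 2 and let v : Fin d → ℝ satisfy ∑_j v_j = 1 and ∑_j v_j² = d. Then: (a) min_j v_j = −(√(d+1) − 1)/d holds if and only if v takes the value ((d−1)√(d+1) + 1)/d at exactly one coordinate and the value (1 − √(d+1))/d at the remaining d−1 coordinates; (b) min_j v_j = −((d−1)√(d+1) − 1)/d holds if and only if v takes the value (√(d+1) + 1)/d at exactly d−1 coordinates and the value (1 − (d−1)√(d+1))/d at the remaining coordinate. -/

import Mathlib

/-- Equality conditions for the spectral bounds.
(a) `min_j v j = −(√(d+1) − 1)/d` iff `v` takes the value `((d−1)√(d+1)+1)/d` at exactly one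
coordinate and `(1 − √(d+1))/d` at the remaining `d−1` coordinates;
(b) `min_j v j = −((d−1)√(d+1) − 1)/d` iff `v` takes the value `(√(d+1)+1)/d` at exactly `d−1`
coordinates and `(1 − (d−1)√(d+1))/d` at the remaining coordinate. -/
theorem stmt_1 (d : ℕ) (hd : 2 ≤ d) (v : Fin d → ℝ)
    (hsum : ∑ j, v j = 1) (hsq : ∑ j, v j ^ 2 = d) :
    ((⨅ j, v j) = -((Real.sqrt (d + 1) - 1) / d) ↔
      ∃ j₀, v j₀ = (((d : ℝ) - 1) * Real.sqrt (d + 1) + 1) / d ∧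
        ∀ j, j ≠ j₀ → v j = (1 - Real.sqrt (d + 1)) / d) ∧
    ((⨅ j, v j) = -(((((d : ℝ) - 1)) * Real.sqrt (d + 1) - 1) / d) ↔
      ∃ j₀, v j₀ = (1 - ((d : ℝ) - 1) * Real.sqrt (d + 1)) / d ∧
        ∀ j, j ≠ j₀ → v j = (Real.sqrt (d + 1) + 1) / d) := by
  haveI : Nonempty (Fin d) := ⟨⟨0, by omega⟩⟩
  haveI : Nontrivial (Fin d) := ⟨⟨⟨0, by omega⟩, ⟨1, by omega⟩, by simp [Fin.ext_iff]⟩⟩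
  set s := Real.sqrt (d + 1) with hs_def
  have hd0 : (0:ℝ) < d := by positivity
  have hdne : (d:ℝ) ≠ 0 := ne_of_gt hd0
  have hs2 : s ^ 2 = (d:ℝ) + 1 := Real.sq_sqrt (by positivity)
  have hs1 : 1 < s := by
    nlinarith [Real.sqrt_nonneg ((d:ℝ)+1), hs2]
  have hs0 : 0 < s := lt_trans one_pos hs1
  have hattain : ∃ j, v j = ⨅ i, v i := by
    obtain ⟨j, -, hj⟩ := Finset.exists_min_image Finset.univ v
      ⟨Classical.arbitrary _, Finset.mem_univ _⟩
    exact ⟨j, le_antisymm (le_ciInf fun i => hj i (Finset.mem_univ i))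
      (ciInf_le (Finite.bddBelow_range v) j)⟩
  have hle : ∀ j, (⨅ i, v i) ≤ v j := fun j => ciInf_le (Finite.bddBelow_range v) j
  have expand : ∀ c : ℝ, ∑ j, (v j - c)^2 = (d:ℝ) - 2*c + d * c^2 := by
    intro c
    have h : ∀ j : Fin d, (v j - c)^2 = v j ^2 - (2*c) * v j + c^2 := fun j => by ring
    simp_rw [h, Finset.sum_add_distrib, Finset.sum_sub_distrib, ← Finset.mul_sum,
      Finset.sum_const, Finset.card_univ, Fintype.card_fin, nsmul_eq_mul, hsum, hsq]
    ring
  constructor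
  · -- part (a)
    constructor
    · intro hmin
      set m : ℝ := (1 - s) / d with hm_def
      have hmin' : (⨅ i, v i) = m := by rw [hmin]; ring
      set w : Fin d → ℝ := fun j => v j - m with hw_def
      have hw0 : ∀ j, 0 ≤ w j := fun j => by
        simp only [hw_def, sub_nonneg]; rw [← hmin']; exact hle j
      have hwsum : ∑ j, w j = s := by
        simp_rw [hw_def, Finset.sum_sub_distrib, Finset.sum_const, Finset.card_univ,
          Fintype.card_fin, nsmul_eq_mul, hsum, hm_def]
        field_simp
        ring
      have hwsq : ∑ j, w j ^ 2 = s ^ 2 := by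
        rw [hw_def]
        show ∑ j, (v j - m)^2 = s^2
        rw [expand m, hm_def]
        field_simp
        linear_combination (1 - (d:ℝ)) * hs2
      have hwle : ∀ j, w j ≤ s := by
        intro j
        rw [← hwsum]
        exact Finset.single_le_sum (fun i _ => hw0 i) (Finset.mem_univ j)
      have hzero : ∀ j ∈ Finset.univ, w j * (s - w j) = 0 := by
        rw [← Finset.sum_eq_zero_iff_of_nonneg
          (fun j _ => mul_nonneg (hw0 j) (sub_nonneg.mpr (hwle j)))]
        have h : ∑ j, w j * (s - w j) = s * (∑ j, w j) - ∑ j, w j ^ 2 := by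
          rw [Finset.mul_sum, ← Finset.sum_sub_distrib]
          exact Finset.sum_congr rfl fun j _ => by ring
        rw [h, hwsum, hwsq]; ring
      have hcases : ∀ j, w j = 0 ∨ w j = s := by
        intro j
        rcases mul_eq_zero.mp (hzero j (Finset.mem_univ j)) with h | h
        · exact Or.inl h
        · exact Or.inr (by linarith)
      have hex : ∃ j₀, w j₀ = s := by
        by_contra h
        push_neg at h
        have h0 : ∀ j ∈ Finset.univ, w j = 0 := fun j _ =>
          (hcases j).resolve_right (h j)
        rw [Finset.sum_eq_zero h0] at hwsum
        linarith
      obtain ⟨j₀, hj₀⟩ := hex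
      refine ⟨j₀, ?_, ?_⟩
      · have hv : v j₀ = m + s := by rw [← hj₀]; simp [hw_def]
        rw [hv, hm_def]; field_simp; ring
      · intro j hj
        have hwj : w j = 0 := by
          rcases hcases j with h | h
          · exact h
          · exfalso
            have hpair : w j₀ + w j ≤ ∑ i, w i := by
              rw [← Finset.sum_pair (Ne.symm hj)]
              exact Finset.sum_le_sum_of_subset_of_nonneg
                (Finset.subset_univ _) (fun i _ _ => hw0 i)
            rw [hwsum, hj₀, h] at hpair
            linarith
        have hv : v j = m := by simp only [hw_def] at hwj; linarith
        rw [hv, hm_def]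
    · rintro ⟨j₀, hj₀, hrest⟩
      obtain ⟨j₁, hj₁⟩ := exists_ne j₀
      apply le_antisymm
      · calc (⨅ i, v i) ≤ v j₁ := hle j₁
          _ = -((s - 1) / d) := by rw [hrest j₁ hj₁]; ring
      · apply le_ciInf
        intro j
        by_cases h : j = j₀
        · rw [h, hj₀]
          have heq : -((s - 1) / (d:ℝ)) = (1 - s)/d := by ring
          rw [heq]
          gcongr
          nlinarith [mul_pos hd0 hs0]
        · rw [hrest j h]
          exact le_of_eq (by ring)
  · -- part (b)
    constructor
    · intro hmin
      set M : ℝ := (1 - ((d:ℝ) - 1) * s) / d with hM_def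
      have hmin' : (⨅ i, v i) = M := by rw [hmin]; ring
      obtain ⟨j₀, hj₀⟩ := hattain
      rw [hmin'] at hj₀
      set c : ℝ := (1 + s) / d with hc_def
      have key : ∑ j ∈ Finset.univ.erase j₀, (v j - c)^2 = 0 := by
        rw [Finset.sum_erase_eq_sub (Finset.mem_univ j₀), expand c, hj₀, hM_def, hc_def]
        field_simp
        linear_combination ((d:ℝ) - (d:ℝ)^2) * hs2
      refine ⟨j₀, by rw [hj₀], fun j hj => ?_⟩
      have hmem : j ∈ Finset.univ.erase j₀ := Finset.mem_erase.mpr ⟨hj, Finset.mem_univ j⟩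
      have h0 : (v j - c)^2 = 0 :=
        (Finset.sum_eq_zero_iff_of_nonneg (fun i _ => sq_nonneg _)).mp key j hmem
      have : v j = c := by nlinarith [sq_nonneg (v j - c)]
      rw [this, hc_def]; ring
    · rintro ⟨j₀, hj₀, hrest⟩
      apply le_antisymm
      · calc (⨅ i, v i) ≤ v j₀ := hle j₀
          _ = -((((d:ℝ) - 1) * s - 1) / d) := by rw [hj₀]; ring
      · apply le_ciInf
        intro j
        by_cases h : j = j₀
        · rw [h, hj₀]; exact le_of_eq (by ring)
        · rw [hrest j h]
          have hds : (0:ℝ) < d * s := mul_pos hd0 hs0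
          have : -((((d:ℝ) - 1) * s - 1) / d) = (s + 1)/d - (d*s)/d := by field_simp; ring
          rw [this]
          have : (d:ℝ)*s/d ≥ 0 := by positivity
          linarith
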